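/- Let G be a k-factor-critical graph of order n > k + 2 with maximum degree Δ(G) = n − 1. Then G is minimally k-factor-critical if and only if G has exactly one vertex of degree n − 1 and n − 1 vertices of degree k + 1. -/

import Mathlib

open SimpleGraph

variable {V : Type*}

/-- `G` has a perfect matching covering exactly the vertex set `A`
(i.e. the graph obtained from `G` by deleting the vertices outside `A` has a perfect matching). -/
def HasPMOn (G : SimpleGraph V) (A : Set V) : Prop :=
  ∃ M : G.Subgraph, M.verts = A ∧ M.IsMatching

/-- `G` is `k`-factor-critical: deleting any `k` vertices leaves a graph with a perfect matching. -/
def FactorCritical [Fintype V] (G : SimpleGraph V) (k : ℕ) : Prop :=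
  ∀ S : Finset V, S.card = k → HasPMOn G ((↑S : Set V)ᶜ)

/-- `G` is minimally `k`-factor-critical. -/
def MinFactorCritical [Fintype V] (G : SimpleGraph V) (k : ℕ) : Prop :=
  FactorCritical G k ∧ ∀ u v : V, G.Adj u v → ¬ FactorCritical (G.deleteEdges {s(u,v)}) k

/-- The number of odd connected components of a graph. -/
noncomputable def oddComponents {W : Type*} (G : SimpleGraph W) : ℕ :=
  Nat.card {c : G.ConnectedComponent // Odd (Nat.card c.supp)}

/-- Transfer a subgraph of `G` to a subgraph of `H`, given that all its edges are edges of `H`. -/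
def SimpleGraph.Subgraph.transferTo {G H : SimpleGraph V} (M : G.Subgraph)
    (h : ∀ a b, M.Adj a b → H.Adj a b) : H.Subgraph where
  verts := M.verts
  Adj := M.Adj
  adj_sub hab := h _ _ hab
  edge_vert := M.edge_vert
  symm := M.symm

lemma hasPMOn_of_subgraph {G H : SimpleGraph V} {A : Set V} (M : G.Subgraph)
    (hv : M.verts = A) (hm : M.IsMatching) (h : ∀ a b, M.Adj a b → H.Adj a b) :
    HasPMOn H A :=
  ⟨M.transferTo h, hv, hm⟩

lemma not_hasPMOn {G : SimpleGraph V} {A : Set V} {v : V} (hv : v ∈ A)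
    (h : ∀ x, G.Adj v x → x ∉ A) : ¬ HasPMOn G A := by
  rintro ⟨M, hverts, hM⟩
  obtain ⟨w, hw, -⟩ := hM (show v ∈ M.verts from hverts ▸ hv)
  exact h w (M.adj_sub hw) (hverts ▸ M.edge_vert (M.adj_symm hw))

lemma not_factorCritical {G : SimpleGraph V} [Fintype V] {k : ℕ} {v : V} {S : Finset V}
    (hcard : S.card = k) (hvS : v ∉ S) (hN : ∀ x, G.Adj v x → x ∈ S) :
    ¬ FactorCritical G k := fun h =>
  not_hasPMOn (by simpa using hvS) (fun x hx => by simpa using hN x hx) (h S hcard)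

lemma fc_min_degree {G : SimpleGraph V} [Fintype V] [DecidableEq V] [DecidableRel G.Adj]
    {k : ℕ} (hG : FactorCritical G k) (hk : k + 1 ≤ Fintype.card V) (v : V) :
    k + 1 ≤ G.degree v := by
  by_contra h
  push_neg at h
  have hsub : G.neighborFinset v ⊆ Finset.univ.erase v := by
    intro x hx
    exact Finset.mem_erase.2 ⟨((G.mem_neighborFinset v x).1 hx).ne', Finset.mem_univ x⟩
  obtain ⟨S, hNS, hSsub, hScard⟩ := Finset.exists_subsuperset_card_eq (n := k) hsub
    (by rw [G.card_neighborFinset_eq_degree]; omega)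
    (by rw [Finset.card_erase_of_mem (Finset.mem_univ v), Finset.card_univ]; omega)
  exact not_factorCritical hScard (fun hv => (Finset.mem_erase.1 (hSsub hv)).1 rfl)
    (fun x hx => hNS ((G.mem_neighborFinset v x).2 hx)) hG

lemma swap_pm {G : SimpleGraph V} {M : G.Subgraph} (hM : M.IsMatching)
    {v w x y : V} (hvw : M.Adj v w) (hxy : M.Adj x y)
    (hxv : x ≠ v) (hxw : x ≠ w) (hyv : y ≠ v) (hyw : y ≠ w)
    (hvx : G.Adj v x) (hwy : G.Adj w y) :
    ∃ M' : G.Subgraph, M'.verts = M.verts ∧ M'.IsMatching ∧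
      ∀ a b, M'.Adj a b → s(a, b) ≠ s(v, w) := by
  classical
  have huniq : ∀ {a b c : V}, M.Adj a b → M.Adj a c → b = c := fun h1 h2 =>
    (hM (M.edge_vert h1)).unique h1 h2
  have hvw' : v ≠ w := (M.adj_sub hvw).ne
  have hxy' : x ≠ y := (M.adj_sub hxy).ne
  set s : Set V := {v, w, x, y} with hs
  set M' : G.Subgraph := (M.deleteVerts s) ⊔ (G.subgraphOfAdj hvx ⊔ G.subgraphOfAdj hwy)
    with hM'
  have hverts : M'.verts = M.verts := by
    have hvm := M.edge_vert hvw
    have hwm := M.edge_vert (M.adj_symm hvw)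
    have hxm := M.edge_vert hxy
    have hym := M.edge_vert (M.adj_symm hxy)
    simp only [hM', Subgraph.verts_sup, Subgraph.deleteVerts_verts, subgraphOfAdj_verts, hs]
    ext a
    simp only [Set.mem_union, Set.mem_diff, Set.mem_insert_iff, Set.mem_singleton_iff]
    constructor
    · rintro (⟨h, -⟩ | (rfl | rfl) | (rfl | rfl)) <;> assumption
    · intro ha
      by_cases h : a = v ∨ a = w ∨ a = x ∨ a = y
      · rcases h with rfl | rfl | rfl | rfl <;> tauto
      · push_neg at h; tauto
  -- partner of a vertex outside s stays outside s
  have hpart : ∀ {a b : V}, M.Adj a b → a ∉ s → b ∉ s := by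
    intro a b hab ha hb
    rcases hb with hb | hb | hb | hb
    · have h2 : a = w := huniq (M.adj_symm (hb ▸ hab)) hvw
      exact ha (by rw [hs, h2]; simp)
    · have h2 : a = v := huniq (M.adj_symm (hb ▸ hab)) (M.adj_symm hvw)
      exact ha (by rw [hs, h2]; simp)
    · have h2 : a = y := huniq (M.adj_symm (hb ▸ hab)) hxy
      exact ha (by rw [hs, h2]; simp)
    · have hb' : b = y := Set.mem_singleton_iff.1 hb
      have h2 : a = x := huniq (M.adj_symm (hb' ▸ hab)) (M.adj_symm hxy)
      exact ha (by rw [hs, h2]; simp)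
  have hmatch : M'.IsMatching := by
    apply Subgraph.IsMatching.sup
    · intro a ha
      simp only [Subgraph.deleteVerts_verts, Set.mem_diff] at ha
      obtain ⟨b, hb, -⟩ := hM ha.1
      refine ⟨b, ?_, ?_⟩
      · simp only [Subgraph.deleteVerts_adj]
        exact ⟨ha.1, ha.2, M.edge_vert (M.adj_symm hb), hpart hb ha.2, hb⟩
      · intro c hc
        simp only [Subgraph.deleteVerts_adj] at hc
        exact huniq hc.2.2.2.2 hb
    · apply Subgraph.IsMatching.sup
      · exact Subgraph.IsMatching.subgraphOfAdj hvx
      · exact Subgraph.IsMatching.subgraphOfAdj hwy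
      · rw [support_subgraphOfAdj, support_subgraphOfAdj, Set.disjoint_left]
        intro a h1 h2
        simp only [Set.mem_insert_iff, Set.mem_singleton_iff] at h1 h2
        rcases h1 with h1 | h1 <;> rcases h2 with h2 | h2
        · exact hvw' (h1.symm.trans h2)
        · exact hyv (h2.symm.trans h1)
        · exact hxw (h1.symm.trans h2)
        · exact hxy' (h1.symm.trans h2)
    · have h1 : (G.subgraphOfAdj hvx ⊔ G.subgraphOfAdj hwy).support ⊆ s := by
        apply (Subgraph.support_subset_verts _).trans
        simp only [Subgraph.verts_sup, subgraphOfAdj_verts, hs]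
        intro a
        simp only [Set.mem_union, Set.mem_insert_iff, Set.mem_singleton_iff]
        tauto
      have h2 : (M.deleteVerts s).support ⊆ M.verts \ s := by
        apply (Subgraph.support_subset_verts _).trans
        simp
      exact Set.disjoint_of_subset h2 h1 (Set.disjoint_sdiff_left)
  refine ⟨M', hverts, hmatch, ?_⟩
  intro a b hab
  rcases hab with hab | hab | hab
  · simp only [Subgraph.deleteVerts_adj] at hab
    intro he
    rw [Sym2.eq_iff] at he
    rcases he with ⟨rfl, rfl⟩ | ⟨rfl, rfl⟩
    · exact hab.2.1 (by simp [hs])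
    · exact hab.2.1 (by simp [hs])
  · rw [subgraphOfAdj_adj] at hab
    intro he
    rw [← hab, Sym2.eq_iff] at he
    rcases he with ⟨-, h⟩ | ⟨h, h'⟩
    · exact hxw h
    · exact hxv h'
  · rw [subgraphOfAdj_adj] at hab
    intro he
    rw [← hab, Sym2.eq_iff] at he
    rcases he with ⟨h, -⟩ | ⟨-, h⟩
    · exact hvw' h.symm
    · exact hyv h

lemma key_lemma {G : SimpleGraph V} {A : Set V} {v w : V}
    (hub : ∀ u, u ≠ w → G.Adj w u) (hvw : v ≠ w) (hvA : v ∈ A)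
    (hPM : HasPMOn G A) (hno : ¬ HasPMOn (G.deleteEdges {s(v, w)}) A) :
    ∀ x, G.Adj v x → x ≠ w → x ∉ A := by
  obtain ⟨M, hA, hM⟩ := hPM
  have huniq : ∀ {a b c : V}, M.Adj a b → M.Adj a c → b = c := fun h1 h2 =>
    (hM (M.edge_vert h1)).unique h1 h2
  have hMvw : M.Adj v w := by
    by_contra hc
    refine hno (hasPMOn_of_subgraph M hA hM fun a b hab => ?_)
    rw [SimpleGraph.deleteEdges_adj]
    refine ⟨M.adj_sub hab, ?_⟩
    simp only [Set.mem_singleton_iff, Sym2.eq_iff]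
    rintro (⟨rfl, rfl⟩ | ⟨rfl, rfl⟩)
    · exact hc hab
    · exact hc (M.adj_symm hab)
  intro x hvx hxw hxA
  obtain ⟨y, hxy, -⟩ := hM (show x ∈ M.verts from hA ▸ hxA)
  have hyv : y ≠ v := by
    rintro rfl
    exact hxw (huniq hMvw (M.adj_symm hxy)).symm
  have hyw : y ≠ w := by
    rintro rfl
    exact hvx.ne (huniq (M.adj_symm hMvw) (M.adj_symm hxy))
  obtain ⟨M', hverts, hmatch, havoid⟩ :=
    swap_pm hM hMvw hxy hvx.ne' hxw hyv hyw hvx (hub y hyw)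
  refine hno (hasPMOn_of_subgraph M' (hverts.trans hA) hmatch fun a b hab => ?_)
  rw [SimpleGraph.deleteEdges_adj]
  exact ⟨M'.adj_sub hab, by simpa using havoid a b hab⟩

lemma hub_of_degree {G : SimpleGraph V} [Fintype V] [DecidableEq V] [DecidableRel G.Adj]
    {w : V} {n : ℕ} (hn : Fintype.card V = n) (hd : G.degree w = n - 1) :
    ∀ u, u ≠ w → G.Adj w u := by
  intro u hu
  have hsub : G.neighborFinset w ⊆ Finset.univ.erase w := fun x hx =>
    Finset.mem_erase.2 ⟨((G.mem_neighborFinset w x).1 hx).ne', Finset.mem_univ x⟩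
  have hcard : (Finset.univ.erase w).card ≤ (G.neighborFinset w).card := by
    rw [G.card_neighborFinset_eq_degree, hd, Finset.card_erase_of_mem (Finset.mem_univ w),
      Finset.card_univ, hn]
  have heq := Finset.eq_of_subset_of_card_le hsub hcard
  have hmem : u ∈ G.neighborFinset w := by
    rw [heq]; exact Finset.mem_erase.2 ⟨hu, Finset.mem_univ u⟩
  exact (G.mem_neighborFinset w u).1 hmem

theorem minFactorCritical_iff_maxDegree_n_sub_one [Fintype V] [DecidableEq V]
    (G : SimpleGraph V) [DecidableRel G.Adj] (n k : ℕ)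
    (hn : Fintype.card V = n) (hnk : n > k + 2)
    (hG : FactorCritical G k) (hmax : G.maxDegree = n - 1) :
    MinFactorCritical G k ↔
      ((Finset.univ.filter (fun v : V => G.degree v = n - 1)).card = 1 ∧
        (Finset.univ.filter (fun v : V => G.degree v = k + 1)).card = n - 1) := by
  have hne : Nonempty V := Fintype.card_pos_iff.1 (by omega)
  obtain ⟨w, hwdeg'⟩ := G.exists_maximal_degree_vertex
  have hwdeg : G.degree w = n - 1 := by rw [← hwdeg', hmax]
  have hub : ∀ u, u ≠ w → G.Adj w u := hub_of_degree hn hwdeg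
  constructor
  · intro hmin
    have hdeg : ∀ v, v ≠ w → G.degree v = k + 1 := by
      intro v hv
      refine le_antisymm ?_ (fc_min_degree hG (by omega) v)
      have hadj : G.Adj v w := (hub v hv).symm
      have hnfc := hmin.2 v w hadj
      rw [FactorCritical] at hnfc
      push_neg at hnfc
      obtain ⟨S, hScard, hSno⟩ := hnfc
      have htrans : v ∈ S ∨ w ∈ S → HasPMOn (G.deleteEdges {s(v, w)}) ((↑S : Set V)ᶜ) := by
        intro hz
        obtain ⟨M, hMv, hMm⟩ := hG S hScard
        refine hasPMOn_of_subgraph M hMv hMm fun a b hab => ?_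
        rw [SimpleGraph.deleteEdges_adj]
        refine ⟨M.adj_sub hab, ?_⟩
        simp only [Set.mem_singleton_iff, Sym2.eq_iff]
        have haM := M.edge_vert hab
        have hbM := M.edge_vert (M.adj_symm hab)
        rw [hMv] at haM hbM
        rintro (⟨rfl, rfl⟩ | ⟨rfl, rfl⟩) <;> rcases hz with h | h
        · exact haM (Finset.mem_coe.2 h)
        · exact hbM (Finset.mem_coe.2 h)
        · exact hbM (Finset.mem_coe.2 h)
        · exact haM (Finset.mem_coe.2 h)
      have hvS : v ∉ S := fun h => hSno (htrans (Or.inl h))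
      have hwS : w ∉ S := fun h => hSno (htrans (Or.inr h))
      have hkey := key_lemma hub hv (by simpa using hvS) (hG S hScard) hSno
      have hsub : G.neighborFinset v ⊆ insert w S := by
        intro x hx
        rw [G.mem_neighborFinset] at hx
        rw [Finset.mem_insert]
        by_cases hxw : x = w
        · exact Or.inl hxw
        · right
          by_contra hxS
          exact hkey x hx hxw (by simpa using hxS)
      calc G.degree v = (G.neighborFinset v).card := (G.card_neighborFinset_eq_degree v).symm
        _ ≤ (insert w S).card := Finset.card_le_card hsub
        _ ≤ S.card + 1 := Finset.card_insert_le _ _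
        _ = k + 1 := by rw [hScard]
    constructor
    · have : Finset.univ.filter (fun v : V => G.degree v = n - 1) = {w} := by
        ext a
        simp only [Finset.mem_filter, Finset.mem_univ, true_and, Finset.mem_singleton]
        constructor
        · intro ha
          by_contra haw
          have := hdeg a haw
          omega
        · rintro rfl; exact hwdeg
      rw [this, Finset.card_singleton]
    · have : Finset.univ.filter (fun v : V => G.degree v = k + 1) = Finset.univ.erase w := by
        ext a
        simp only [Finset.mem_filter, Finset.mem_univ, true_and, Finset.mem_erase, and_true]
        constructor
        · rintro ha rfl
          rw [hwdeg] at ha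
          omega
        · exact hdeg a
      rw [this, Finset.card_erase_of_mem (Finset.mem_univ w), Finset.card_univ, hn]
  · rintro ⟨h1, h2⟩
    refine ⟨hG, ?_⟩
    intro u v huv hfc
    have main : ∀ z z' : V, G.Adj z z' → G.degree z = k + 1 → s(z, z') = s(u, v) → False := by
      intro z z' hzz' hdz hedge
      have hz'mem : z' ∈ G.neighborFinset z := (G.mem_neighborFinset z z').2 hzz'
      have hScard : ((G.neighborFinset z).erase z').card = k := by
        rw [Finset.card_erase_of_mem hz'mem, G.card_neighborFinset_eq_degree, hdz]
        omega
      refine not_factorCritical (v := z) hScard ?_ ?_ hfc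
      · intro h
        exact G.irrefl ((G.mem_neighborFinset z z).1 (Finset.mem_of_mem_erase h))
      · intro x hx
        rw [SimpleGraph.deleteEdges_adj] at hx
        obtain ⟨hadj, hne2⟩ := hx
        refine Finset.mem_erase.2 ⟨?_, (G.mem_neighborFinset z x).2 hadj⟩
        rintro rfl
        exact hne2 (by rw [hedge]; exact rfl)
    -- every vertex has degree n-1 or k+1
    have hdisj : Disjoint (Finset.univ.filter (fun v : V => G.degree v = n - 1))
        (Finset.univ.filter (fun v : V => G.degree v = k + 1)) := by
      rw [Finset.disjoint_left]
      intro a ha hb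
      simp only [Finset.mem_filter, Finset.mem_univ, true_and] at ha hb
      omega
    have huniv : (Finset.univ.filter (fun v : V => G.degree v = n - 1)) ∪
        (Finset.univ.filter (fun v : V => G.degree v = k + 1)) = Finset.univ := by
      apply Finset.eq_univ_of_card
      rw [Finset.card_union_of_disjoint hdisj, h1, h2, hn]
      omega
    have hall : ∀ a : V, G.degree a = n - 1 ∨ G.degree a = k + 1 := by
      intro a
      have : a ∈ (Finset.univ.filter (fun v : V => G.degree v = n - 1)) ∪
          (Finset.univ.filter (fun v : V => G.degree v = k + 1)) := by
        rw [huniv]; exact Finset.mem_univ a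
      simpa using this
    rcases hall u with hu | hu
    · rcases hall v with hv | hv
      · -- both full degree: contradicts card = 1
        have hu' : u ∈ Finset.univ.filter (fun v : V => G.degree v = n - 1) := by
          simp [hu]
        have hv' : v ∈ Finset.univ.filter (fun v : V => G.degree v = n - 1) := by
          simp [hv]
        exact huv.ne (Finset.card_le_one.1 (le_of_eq h1) u hu' v hv')
      · exact main v u huv.symm hv (Sym2.eq_swap)
    · exact main u v huv hu rfl
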